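/- Let S be a real symmetric invertible n×n matrix and T a real skew-symmetric n×n matrix such that S − T·S⁻¹·T is invertible. Then S + T is invertible and (S + T)⁻¹ = (S − T S⁻¹ T)⁻¹ − S⁻¹ T (S − T S⁻¹ T)⁻¹; moreover (S − T S⁻¹ T)⁻¹ is symmetric and S⁻¹ T (S − T S⁻¹ T)⁻¹ is skew-symmetric, so these are respectively the symmetric and skew-symmetric parts of (S + T)⁻¹. -/
import Mathlib


open Matrix

/-- For `S` real symmetric invertible and `T` skew-symmetric with
`S − T S⁻¹ T` invertible, `S + T` is invertible with
`(S+T)⁻¹ = (S − T S⁻¹ T)⁻¹ − S⁻¹ T (S − T S⁻¹ T)⁻¹`; moreover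
`(S − T S⁻¹ T)⁻¹` is symmetric and `S⁻¹ T (S − T S⁻¹ T)⁻¹` is skew-symmetric,
so these are the symmetric and skew-symmetric parts of `(S+T)⁻¹`. -/
theorem stmt8 (n : ℕ) (S T : Matrix (Fin n) (Fin n) ℝ)
    (hSsymm : Sᵀ = S) (hSunit : IsUnit S.det) (hT : Tᵀ = -T)
    (hinv : IsUnit (S - T * S⁻¹ * T).det) :
    IsUnit (S + T).det ∧
    (S + T)⁻¹ = (S - T * S⁻¹ * T)⁻¹ - S⁻¹ * T * (S - T * S⁻¹ * T)⁻¹ ∧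
    ((S - T * S⁻¹ * T)⁻¹)ᵀ = (S - T * S⁻¹ * T)⁻¹ ∧
    (S⁻¹ * T * (S - T * S⁻¹ * T)⁻¹)ᵀ = -(S⁻¹ * T * (S - T * S⁻¹ * T)⁻¹) := by
  set M := S - T * S⁻¹ * T with hM
  have hSS : S * S⁻¹ = 1 := Matrix.mul_nonsing_inv S hSunit
  have hSS' : S⁻¹ * S = 1 := Matrix.nonsing_inv_mul S hSunit
  have hMM : M * M⁻¹ = 1 := Matrix.mul_nonsing_inv M hinv
  have hMM' : M⁻¹ * M = 1 := Matrix.nonsing_inv_mul M hinv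
  have hright : (S + T) * (M⁻¹ - S⁻¹ * T * M⁻¹) = 1 := by
    have h1 : (S + T) * (M⁻¹ - S⁻¹ * T * M⁻¹)
        = (S + T - (S * S⁻¹) * T - T * (S⁻¹ * T)) * M⁻¹ := by noncomm_ring
    rw [h1, hSS]
    have h2 : S + T - 1 * T - T * (S⁻¹ * T) = M := by rw [hM]; noncomm_ring
    rw [h2, hMM]
  have hunit : IsUnit (S + T).det := Matrix.isUnit_det_of_right_inverse hright
  have hinvST : (S + T)⁻¹ = M⁻¹ - S⁻¹ * T * M⁻¹ := Matrix.inv_eq_right_inv hright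
  have hSinvT : (S⁻¹)ᵀ = S⁻¹ := by rw [Matrix.transpose_nonsing_inv, hSsymm]
  have hMT : Mᵀ = M := by
    rw [hM]
    simp [Matrix.transpose_sub, Matrix.transpose_mul, hSsymm, hT, hSinvT]
    noncomm_ring
  have hMiT : (M⁻¹)ᵀ = M⁻¹ := by rw [Matrix.transpose_nonsing_inv, hMT]
  have hcomm : T * S⁻¹ * M = M * (S⁻¹ * T) := by
    rw [hM]
    calc T * S⁻¹ * (S - T * S⁻¹ * T)
        = T * (S⁻¹ * S) - T * S⁻¹ * T * S⁻¹ * T := by noncomm_ring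
      _ = (S * S⁻¹) * T - T * S⁻¹ * T * (S⁻¹ * T) := by
          rw [hSS', hSS]; noncomm_ring
      _ = (S - T * S⁻¹ * T) * (S⁻¹ * T) := by noncomm_ring
  have hswap : M⁻¹ * (T * S⁻¹) = S⁻¹ * T * M⁻¹ := by
    calc M⁻¹ * (T * S⁻¹) = M⁻¹ * (T * S⁻¹) * (M * M⁻¹) := by rw [hMM, mul_one]
      _ = M⁻¹ * (T * S⁻¹ * M) * M⁻¹ := by noncomm_ring
      _ = M⁻¹ * (M * (S⁻¹ * T)) * M⁻¹ := by rw [hcomm]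
      _ = (M⁻¹ * M) * (S⁻¹ * T * M⁻¹) := by noncomm_ring
      _ = S⁻¹ * T * M⁻¹ := by rw [hMM', one_mul]
  refine ⟨hunit, hinvST, hMiT, ?_⟩
  calc (S⁻¹ * T * M⁻¹)ᵀ = (M⁻¹)ᵀ * (Tᵀ * (S⁻¹)ᵀ) := by
        simp [Matrix.transpose_mul, mul_assoc]
    _ = -(M⁻¹ * (T * S⁻¹)) := by rw [hMiT, hT, hSinvT]; noncomm_ring
    _ = -(S⁻¹ * T * M⁻¹) := by rw [hswap]
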